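/- arXiv:2203.09211 — 2 statements merged into one kernel-verified Lean document; each statement's English description precedes it below -/
import Mathlib

section
/- Let F : Mod A → Mod B be a functor between module categories of finite dimensional algebras that is a t-eventually homological isomorphism and essentially surjective. Then for every finitely generated A-module X, the projective dimension of F(X) over B is at most the maximum of t and the projective dimension of X over A. -/
open CategoryTheory Opposite Limits

noncomputable section

/-- `Ext^j` over the `k`-algebra `Λ`, as a `k`-module. -/
abbrev extM (k : Type) [Field k] (Λ : Type) [Ring Λ] [Algebra k Λ] (j : ℕ)
    (X Y : ModuleCat.{0} Λ) : ModuleCat k :=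
  ((Ext k (ModuleCat.{0} Λ) j).obj (op X)).obj Y

/-- projective dimension at most `n`, via vanishing of `Ext^j (X, -)` for all `j > n`. -/
def pdLE (k : Type) [Field k] (Λ : Type) [Ring Λ] [Algebra k Λ]
    (X : ModuleCat.{0} Λ) (n : ℕ) : Prop :=
  ∀ (Y : ModuleCat.{0} Λ) (j : ℕ), n < j → Subsingleton (extM k Λ j X Y)

/-- injective dimension at most `n`, via vanishing of `Ext^j (-, Y)` for all `j > n`. -/
def idLE (k : Type) [Field k] (Λ : Type) [Ring Λ] [Algebra k Λ]
    (Y : ModuleCat.{0} Λ) (n : ℕ) : Prop :=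
  ∀ (X : ModuleCat.{0} Λ) (j : ℕ), n < j → Subsingleton (extM k Λ j X Y)

/-- `X ∈ ⊥Λ`, i.e. `Ext^i (X, Λ) = 0` for all `i > 0`. -/
def MemPerp (k : Type) [Field k] (Λ : Type) [Ring Λ] [Algebra k Λ]
    (X : ModuleCat.{0} Λ) : Prop :=
  ∀ j : ℕ, 0 < j → Subsingleton (extM k Λ j X (ModuleCat.of Λ Λ))

/-- `F` is a `t`-eventually homological isomorphism: for all `j > t` there are
isomorphisms `Ext^j_A(X, Y) ≅ Ext^j_B(FX, FY)` for all finitely generated `X`, `Y`. -/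
def IsEHI (k : Type) [Field k] (A B : Type) [Ring A] [Algebra k A] [Ring B] [Algebra k B]
    (F : ModuleCat.{0} A ⥤ ModuleCat.{0} B) (t : ℕ) : Prop :=
  ∀ (X Y : ModuleCat.{0} A), Module.Finite A X → Module.Finite A Y →
    ∀ j : ℕ, t < j → Nonempty (extM k A j X Y ≅ extM k B j (F.obj X) (F.obj Y))

/-- `F` is essentially surjective on finitely generated modules. -/
def EssSurjFG (A B : Type) [Ring A] [Ring B]
    (F : ModuleCat.{0} A ⥤ ModuleCat.{0} B) : Prop :=
  ∀ Y : ModuleCat.{0} B, Module.Finite B Y →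
    ∃ X : ModuleCat.{0} A, Module.Finite A X ∧ Nonempty (F.obj X ≅ Y)

section Trans
variable (k : Type) [Field k] (B : Type) [Ring B] [Algebra k B]

lemma subsingleton_of_isZero {R : Type} [Ring R] {M : ModuleCat R} (h : IsZero M) :
    Subsingleton M := by
  constructor
  intro a b
  have h0 : (𝟙 M : M ⟶ M) = 0 := h.eq_of_src _ _
  calc a = (𝟙 M : M ⟶ M) a := rfl
  _ = (0 : M ⟶ M) a := by rw [h0]
  _ = (𝟙 M : M ⟶ M) b := by rw [h0]; rfl
  _ = b := rfl

lemma subsingleton_congr {R : Type} [Ring R] {M N : ModuleCat R} (e : M ≅ N) :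
    Subsingleton M ↔ Subsingleton N := by
  have hN : ∀ a : N, e.hom (e.inv a) = a := fun a =>
    (show (e.inv ≫ e.hom) a = (𝟙 N : N ⟶ N) a from ConcreteCategory.congr_hom e.inv_hom_id a)
  have hM : ∀ a : M, e.inv (e.hom a) = a := fun a =>
    (show (e.hom ≫ e.inv) a = (𝟙 M : M ⟶ M) a from ConcreteCategory.congr_hom e.hom_inv_id a)
  constructor
  · intro h
    exact ⟨fun a b => by rw [← hN a, ← hN b, Subsingleton.elim (e.inv a) (e.inv b)]⟩
  · intro h
    exact ⟨fun a b => by rw [← hM a, ← hM b, Subsingleton.elim (e.hom a) (e.hom b)]⟩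

def Fac (M : ModuleCat.{0} B) (P : ProjectiveResolution M) (j : ℕ) (Y : ModuleCat.{0} B) : Prop :=
  ∀ f : P.complex.X (j+1) ⟶ Y, P.complex.d (j+2) (j+1) ≫ f = 0 →
    ∃ g : P.complex.X j ⟶ Y, f = P.complex.d (j+1) j ≫ g

lemma subsingleton_ext_iff (M : ModuleCat.{0} B) (P : ProjectiveResolution M) (j : ℕ)
    (Y : ModuleCat.{0} B) :
    Subsingleton (extM k B (j+1) M Y) ↔ Fac B M P j Y := by
  have e := P.isoExt (R := k) (j+1) Y
  set C := P.complex.linearYonedaObj k Y with hC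
  rw [subsingleton_congr e]
  have h2 : Subsingleton (C.homology (j+1)) ↔ C.ExactAt (j+1) := by
    rw [HomologicalComplex.exactAt_iff_isZero_homology]
    exact ⟨fun h => ModuleCat.isZero_of_subsingleton _, fun h => subsingleton_of_isZero h⟩
  rw [h2]
  rw [C.exactAt_iff' j (j+1) (j+2) (by simp) (by simp)]
  rw [ShortComplex.moduleCat_exact_iff]
  constructor
  · intro h f hf
    have hf' : (C.sc' j (j+1) (j+2)).g f = 0 := by
      have : (C.d (j+1) (j+2)) f = P.complex.d (j+2) (j+1) ≫ f := rfl
      exact this.trans hf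
    obtain ⟨g, hg⟩ := h f hf'
    exact ⟨g, by
      have : (C.sc' j (j+1) (j+2)).f g = P.complex.d (j+1) j ≫ g := rfl
      rw [← this, hg]⟩
  · intro h f hf
    have : (C.d (j+1) (j+2)) f = P.complex.d (j+2) (j+1) ≫ f := rfl
    obtain ⟨g, hg⟩ := h f (this.symm.trans hf)
    refine ⟨g, ?_⟩
    have h3 : (C.sc' j (j+1) (j+2)).f g = P.complex.d (j+1) j ≫ g := rfl
    rw [h3, ← hg]

end Trans
section FacLemmas
variable (k : Type) [Field k] (B : Type) [Ring B] [Algebra k B]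

variable {B} {M : ModuleCat.{0} B} (P : ProjectiveResolution M) (j : ℕ)

lemma fac_of_subsingleton (Y : ModuleCat.{0} B) (h : Subsingleton Y) :
    Fac B M P j Y := by
  intro f _
  refine ⟨0, ?_⟩
  apply ModuleCat.hom_ext
  apply LinearMap.ext
  intro x
  exact Subsingleton.elim _ _

lemma fac_pi {ι : Type} (Z : ι → Type) [∀ i, AddCommGroup (Z i)] [∀ i, Module B (Z i)]
    (h : ∀ i, Fac B M P j (ModuleCat.of B (Z i))) :
    Fac B M P j (ModuleCat.of B (∀ i, Z i)) := by
  intro f hf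
  have hcomp : ∀ i : ι, ∃ g : P.complex.X j ⟶ ModuleCat.of B (Z i),
      ModuleCat.ofHom ((LinearMap.proj i).comp f.hom) =
        (P.complex.d (j+1) j ≫ g : _ ⟶ _) := by
    intro i
    refine h i (ModuleCat.ofHom ((LinearMap.proj i).comp f.hom)) ?_
    apply ModuleCat.hom_ext
    apply LinearMap.ext
    intro x
    have : f (P.complex.d (j+2) (j+1) x) = 0 := by
      exact (ConcreteCategory.congr_hom hf x : _)
    show (f (P.complex.d (j+2) (j+1) x)) i = 0
    rw [this]; rfl
  choose g hg using hcomp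
  refine ⟨ModuleCat.ofHom (LinearMap.pi (fun i => (g i).hom)), ?_⟩
  apply ModuleCat.hom_ext
  apply LinearMap.ext
  intro x
  funext i
  have := ConcreteCategory.congr_hom (hg i) x
  exact this

lemma fac_retract (W Y : ModuleCat.{0} B) (hW : Fac B M P j W)
    (i : Y ⟶ W) (r : W ⟶ Y) (hri : ∀ y : Y, r (i y) = y) : Fac B M P j Y := by
  intro f hf
  obtain ⟨g, hg⟩ := hW (f ≫ i) (by rw [← Category.assoc, hf, Limits.zero_comp])
  refine ⟨g ≫ r, ?_⟩
  apply ModuleCat.hom_ext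
  apply LinearMap.ext
  intro x
  have h1 : i (f x) = g (P.complex.d (j+1) j x) := ConcreteCategory.congr_hom hg x
  have : r (i (f x)) = r (g (P.complex.d (j+1) j x)) := by rw [h1]
  rw [hri] at this
  exact this

lemma fac_ext (Y : ModuleCat.{0} B) (Y' : Submodule B Y)
    (h1 : Fac B M P j (ModuleCat.of B Y'))
    (h2 : Fac B M P j (ModuleCat.of B (Y ⧸ Y'))) : Fac B M P j Y := by
  intro f hf
  haveI : Projective (P.complex.X j) := P.projective j
  set q : Y ⟶ ModuleCat.of B (Y ⧸ Y') := ModuleCat.ofHom Y'.mkQ with hq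
  haveI : Epi q := (ModuleCat.epi_iff_surjective q).2 (Submodule.mkQ_surjective Y')
  obtain ⟨g'', hg''⟩ := h2 (f ≫ q) (by rw [← Category.assoc, hf, Limits.zero_comp])
  set g : P.complex.X j ⟶ Y := Projective.factorThru g'' q with hg
  have hgq : g ≫ q = g'' := Projective.factorThru_comp _ _
  -- h := f - d ≫ g lands in Y'
  set h : P.complex.X (j+1) ⟶ Y := f - P.complex.d (j+1) j ≫ g with hh
  have hmem : ∀ x, h x ∈ Y' := by
    intro x
    have : q (h x) = 0 := by
      have e1 : q (f x) = g'' (P.complex.d (j+1) j x) := by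
        have := ConcreteCategory.congr_hom hg'' x
        exact this
      have e2 : q (g (P.complex.d (j+1) j x)) = g'' (P.complex.d (j+1) j x) := by
        have := ConcreteCategory.congr_hom hgq (P.complex.d (j+1) j x)
        exact this
      show q (f x - g (P.complex.d (j+1) j x)) = 0
      rw [map_sub, e1, e2, sub_self]
    exact (Submodule.Quotient.mk_eq_zero Y').1 this
  set h' : P.complex.X (j+1) ⟶ ModuleCat.of B Y' := ModuleCat.ofHom (LinearMap.codRestrict Y' h.hom hmem) with hh'
  have hd : P.complex.d (j+2) (j+1) ≫ h' = 0 := by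
    apply ModuleCat.hom_ext
    apply LinearMap.ext
    intro x
    apply Subtype.ext
    show h (P.complex.d (j+2) (j+1) x) = 0
    rw [hh]
    show f (P.complex.d (j+2) (j+1) x) - g (P.complex.d (j+1) j (P.complex.d (j+2) (j+1) x)) = 0
    have e3 : f (P.complex.d (j+2) (j+1) x) = 0 := ConcreteCategory.congr_hom hf x
    have e4 : P.complex.d (j+1) j (P.complex.d (j+2) (j+1) x) = 0 := by
      have := P.complex.d_comp_d (j+2) (j+1) j
      exact ConcreteCategory.congr_hom this x
    rw [e3, e4, map_zero, sub_zero]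
  obtain ⟨g', hg'⟩ := h1 h' hd
  refine ⟨g + g' ≫ (ModuleCat.ofHom Y'.subtype : ModuleCat.of B Y' ⟶ Y), ?_⟩
  apply ModuleCat.hom_ext
  apply LinearMap.ext
  intro x
  have e5 : Y'.subtype (h' x) = h x := rfl
  have e6 : h' x = g' (P.complex.d (j+1) j x) := ConcreteCategory.congr_hom hg' x
  show f x = g (P.complex.d (j+1) j x) + Y'.subtype (g' (P.complex.d (j+1) j x))
  rw [← e6, e5, hh]
  show f x = g (P.complex.d (j+1) j x) + (f x - g (P.complex.d (j+1) j x))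
  abel

section RT
variable (B : Type) [Ring B]
/-- The Jacobson radical as a left ideal. -/
abbrev JJ : Ideal B := Ideal.jacobson ⊥

lemma JJ_right {a : B} (ha : a ∈ JJ B) (b : B) : a * b ∈ JJ B := by
  have h1 : TwoSidedIdeal.asIdeal (TwoSidedIdeal.jacobson (⊥ : TwoSidedIdeal B)) =
      (TwoSidedIdeal.asIdeal ⊥).jacobson := TwoSidedIdeal.asIdeal_jacobson ⊥
  have h2 : TwoSidedIdeal.asIdeal (⊥ : TwoSidedIdeal B) = ⊥ := by
    ext x; simp [TwoSidedIdeal.mem_asIdeal]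
  rw [h2] at h1
  have ha' : a ∈ TwoSidedIdeal.jacobson (⊥ : TwoSidedIdeal B) := by
    rw [← TwoSidedIdeal.mem_asIdeal, h1]; exact ha
  have : a * b ∈ TwoSidedIdeal.jacobson (⊥ : TwoSidedIdeal B) :=
    TwoSidedIdeal.mul_mem_right _ _ _ ha'
  rw [← TwoSidedIdeal.mem_asIdeal, h1] at this; exact this

lemma JJ_le_maximal {m : Ideal B} (hm : m.IsMaximal) : JJ B ≤ m :=
  sInf_le ⟨bot_le, hm⟩

lemma JJ_smul_simple {Z : Type} [AddCommGroup Z] [Module B Z] [IsSimpleModule B Z]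
    {a : B} (ha : a ∈ JJ B) (z : Z) : a • z = 0 := by
  by_cases hz : z = 0
  · simp [hz]
  · -- ker of toSpanSingleton is maximal
    have hsur : Function.Surjective (LinearMap.toSpanSingleton B Z z) := by
      have : Submodule.span B {z} = ⊤ := by
        rcases eq_bot_or_eq_top (Submodule.span B {z}) with h | h
        · exfalso; apply hz
          have : z ∈ Submodule.span B {z} := Submodule.mem_span_singleton_self z
          rw [h] at this; simpa using this
        · exact h
      intro w
      have hw : w ∈ Submodule.span B {z} := this ▸ Submodule.mem_top
      rcases Submodule.mem_span_singleton.1 hw with ⟨b, hb⟩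
      exact ⟨b, hb⟩
    have e : (B ⧸ LinearMap.ker (LinearMap.toSpanSingleton B Z z)) ≃ₗ[B] Z :=
      (LinearMap.toSpanSingleton B Z z).quotKerEquivOfSurjective hsur
    have : IsSimpleModule B (B ⧸ LinearMap.ker (LinearMap.toSpanSingleton B Z z)) :=
      IsSimpleModule.congr e
    have hco : IsCoatom (LinearMap.ker (LinearMap.toSpanSingleton B Z z)) :=
      isSimpleModule_iff_isCoatom.1 this
    have : a ∈ LinearMap.ker (LinearMap.toSpanSingleton B Z z) :=
      JJ_le_maximal B ⟨hco⟩ ha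
    simpa [LinearMap.toSpanSingleton, LinearMap.mem_ker] using this

/-- the "J·Z" submodule -/
def Jsmul (Z : Type) [AddCommGroup Z] [Module B Z] : Submodule B Z :=
  Submodule.span B {x : Z | ∃ a ∈ JJ B, ∃ z : Z, x = a • z}

lemma nak {Z : Type} [AddCommGroup Z] [Module B Z] [IsNoetherian B Z]
    (h : Jsmul B Z = ⊤) : Subsingleton Z := by
  by_contra hns
  have hnt : Nontrivial Z := not_subsingleton_iff_nontrivial.1 hns
  have hne : (⊥ : Submodule B Z) ≠ ⊤ := bot_ne_top
  rcases (IsCoatomic.eq_top_or_exists_le_coatom (⊥ : Submodule B Z)) with h' | ⟨N, hN, _⟩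
  · exact hne h'
  · -- Z ⧸ N is simple, J kills it, so Jsmul ≤ N
    have hsimple : IsSimpleModule B (Z ⧸ N) := isSimpleModule_iff_isCoatom.2 hN
    have hle : Jsmul B Z ≤ N := by
      rw [Jsmul, Submodule.span_le]
      rintro x ⟨a, ha, z, rfl⟩
      have : a • (Submodule.Quotient.mk z : Z ⧸ N) = 0 := JJ_smul_simple B ha _
      rw [← Submodule.Quotient.mk_smul, Submodule.Quotient.mk_eq_zero] at this
      exact this
    rw [h] at hle
    exact hN.1 (top_le_iff.1 hle)

lemma exists_finset_maximals [IsArtinian B B] :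
    ∃ s : Finset (Ideal B), (∀ m ∈ s, m.IsMaximal) ∧ JJ B = s.inf id := by
  classical
  set S : Set (Ideal B) := {I | ∃ s : Finset (Ideal B), (∀ m ∈ s, m.IsMaximal) ∧ I = s.inf id}
    with hS
  have hSne : (⊤ : Ideal B) ∈ S := ⟨∅, by simp, by simp⟩
  obtain ⟨I₀, hI₀S, hmin⟩ := IsArtinian.set_has_minimal S ⟨_, hSne⟩
  obtain ⟨s₀, hs₀max, rfl⟩ := hI₀S
  have hle : JJ B ≤ s₀.inf id := Finset.le_inf fun m hm => JJ_le_maximal B (hs₀max m hm)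
  have hge : s₀.inf id ≤ JJ B := by
    apply le_sInf
    rintro m ⟨-, hm⟩
    by_contra hnle
    have hlt : (insert m s₀).inf id < s₀.inf id := by
      rw [Finset.inf_insert]
      refine lt_of_le_of_ne inf_le_right ?_
      intro he
      exact hnle (he ▸ inf_le_left)
    exact hmin _ ⟨insert m s₀, fun m' hm' => by
      rcases Finset.mem_insert.1 hm' with rfl | h
      · exact hm
      · exact hs₀max m' h, rfl⟩ hlt
  exact ⟨s₀, hs₀max, le_antisymm hle hge⟩

lemma pi_semisimple {ι : Type} [Fintype ι] (Z : ι → Type) [∀ i, AddCommGroup (Z i)]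
    [∀ i, Module B (Z i)] (h : ∀ i, IsSemisimpleModule B (Z i)) :
    IsSemisimpleModule B (∀ i, Z i) := by
  classical
  refine isSemisimpleModule_of_isSemisimpleModule_submodule'
    (p := fun i => LinearMap.range (LinearMap.single B Z i)) (fun i => ?_) ?_
  · haveI := h i
    exact IsSemisimpleModule.range _
  · rw [eq_top_iff]
    intro x _
    have hx : x = ∑ i, Pi.single i (x i) := (Finset.univ_sum_single x).symm
    rw [hx]
    exact Submodule.sum_mem _ fun i _ =>
      Submodule.mem_iSup_of_mem i ⟨x i, rfl⟩

lemma semisimple_BmodJ [IsArtinian B B] : IsSemisimpleModule B (B ⧸ (JJ B)) := by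
  classical
  obtain ⟨s, hsmax, hsinf⟩ := exists_finset_maximals B
  set φ : B →ₗ[B] ∀ m : {m // m ∈ s}, B ⧸ (m.1 : Ideal B) :=
    LinearMap.pi (fun m => (m.1 : Ideal B).mkQ) with hφ
  have hJle : JJ B ≤ LinearMap.ker φ := by
    intro x hx
    rw [LinearMap.mem_ker]
    funext m
    show (m.1 : Ideal B).mkQ x = 0
    rw [Submodule.mkQ_apply, Submodule.Quotient.mk_eq_zero]
    exact JJ_le_maximal B (hsmax m.1 m.2) hx
  set ψ := Submodule.liftQ (JJ B) φ hJle with hψ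
  have hinj : Function.Injective ψ := by
    rw [← LinearMap.ker_eq_bot, hψ, Submodule.ker_liftQ_eq_bot]
    intro x hx
    rw [LinearMap.mem_ker] at hx
    have hx' : ∀ m : {m // m ∈ s}, x ∈ (m.1 : Ideal B) := by
      intro m
      have := congrFun hx m
      exact Submodule.Quotient.mk_eq_zero (m.1 : Ideal B) |>.1 (congrFun hx m)
    rw [hsinf, Submodule.mem_finsetInf]
    exact fun m hm => hx' ⟨m, hm⟩
  have hsimple : ∀ m : {m // m ∈ s}, IsSimpleModule B (B ⧸ (m.1 : Ideal B)) := fun m =>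
    isSimpleModule_iff_isCoatom.2 (hsmax m.1 m.2).out
  haveI hss : IsSemisimpleModule B (∀ m : {m // m ∈ s}, B ⧸ (m.1 : Ideal B)) :=
    pi_semisimple B _ (fun m => by
      haveI := hsimple m
      infer_instance)
  exact IsSemisimpleModule.congr (M := ↥(LinearMap.range ψ)) (LinearEquiv.ofInjective ψ hinj)

theorem semisimple_of_J_killed [IsArtinian B B] (Z : Type) [AddCommGroup Z] [Module B Z]
    (h : ∀ a ∈ JJ B, ∀ z : Z, a • z = 0) : IsSemisimpleModule B Z := by
  haveI hss := semisimple_BmodJ B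
  refine isSemisimpleModule_of_isSemisimpleModule_submodule'
    (p := fun z : Z => LinearMap.range (Submodule.liftQ (JJ B) (LinearMap.toSpanSingleton B Z z)
      (fun a ha => by simpa [LinearMap.mem_ker] using h a ha z))) (fun z => ?_) ?_
  · exact IsSemisimpleModule.range _
  · rw [eq_top_iff]
    intro x _
    refine Submodule.mem_iSup_of_mem x ⟨Submodule.Quotient.mk 1, ?_⟩
    rw [Submodule.liftQ_apply]
    simp [LinearMap.toSpanSingleton]

section Nilpotent
variable (k : Type) [Field k] [Algebra k B]

/-- Jacobson radical as a k-subspace -/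
abbrev Jk : Submodule k B := (JJ B).restrictScalars k

lemma mem_Jk {x : B} : x ∈ Jk B k ↔ x ∈ JJ B := Iff.rfl

lemma Jk_pow_left_closed (i : ℕ) {x : B} (hx : x ∈ (Jk B k) ^ (i+1)) (b : B) :
    b * x ∈ (Jk B k) ^ (i+1) := by
  rw [pow_succ'] at hx ⊢
  refine Submodule.mul_induction_on hx (fun a ha y hy => ?_) (fun x y hx hy => ?_)
  · rw [← mul_assoc]
    exact Submodule.mul_mem_mul ((JJ B).smul_mem b ha) hy
  · rw [mul_add]
    exact add_mem hx hy

lemma Jk_pow_right_closed (i : ℕ) {x : B} (hx : x ∈ (Jk B k) ^ (i+1)) (b : B) :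
    x * b ∈ (Jk B k) ^ (i+1) := by
  rw [pow_succ] at hx ⊢
  refine Submodule.mul_induction_on hx (fun y hy a ha => ?_) (fun x y hx hy => ?_)
  · rw [mul_assoc]
    exact Submodule.mul_mem_mul hy (JJ_right B ha b)
  · rw [add_mul]
    exact add_mem hx hy

lemma Jk_pow_le (i : ℕ) : (Jk B k) ^ (i+2) ≤ (Jk B k) ^ (i+1) := by
  rw [pow_succ (n := i+1)]
  intro x hx
  refine Submodule.mul_induction_on hx (fun y hy a ha => ?_) (fun x y hx hy => add_mem hx hy)
  exact Jk_pow_right_closed B k i hy a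

/-- the power as a B-submodule of B -/
def JkPowB (i : ℕ) : Submodule B B where
  carrier := ((Jk B k) ^ (i+1) : Submodule k B)
  add_mem' := fun hx hy => add_mem hx hy
  zero_mem' := zero_mem _
  smul_mem' := fun b x hx => Jk_pow_left_closed B k i hx b

lemma Jk_pow_stab [IsNoetherian B B] (i : ℕ) (h : (Jk B k) ^ (i+2) = (Jk B k) ^ (i+1)) :
    (Jk B k) ^ (i+1) = ⊥ := by
  set Mc : Submodule B B := JkPowB B k i with hMc
  have hsub : Subsingleton Mc := by
    apply nak B
    rw [eq_top_iff]
    rintro ⟨x, hx⟩ -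
    have hx' : x ∈ Submodule.map Mc.subtype (Jsmul B Mc) := by
      have hx2 : x ∈ (Jk B k) ^ (i+2) := h.symm ▸ hx
      rw [pow_succ'] at hx2
      refine Submodule.mul_induction_on hx2 (fun a ha y hy => ?_) (fun u v hu hv => ?_)
      · have hmem : a * y ∈ Mc := by
          show a * y ∈ ((Jk B k) ^ (i+1) : Submodule k B)
          rw [← h, pow_succ']
          exact Submodule.mul_mem_mul ha hy
        refine ⟨⟨a * y, hmem⟩, ?_, rfl⟩
        have : (⟨a * y, hmem⟩ : Mc) = a • (⟨y, hy⟩ : Mc) := by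
          ext; rfl
        rw [this]
        exact Submodule.subset_span ⟨a, ha, ⟨y, hy⟩, rfl⟩
      · rcases hu with ⟨u', hu', rfl⟩
        rcases hv with ⟨v', hv', rfl⟩
        exact ⟨u' + v', add_mem hu' hv', rfl⟩
    rcases hx' with ⟨w, hw, hww⟩
    have : w = ⟨x, hx⟩ := Subtype.ext hww
    rwa [← this]
  rw [eq_bot_iff]
  intro x hx
  have : (⟨x, hx⟩ : Mc) = (⟨0, zero_mem _⟩ : Mc) := Subsingleton.elim _ _
  simpa using congrArg Subtype.val this

lemma Jk_nilpotent [FiniteDimensional k B] [IsNoetherian B B] :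
    ∃ r : ℕ, (Jk B k) ^ (r+1) = ⊥ := by
  have key : ∀ i : ℕ, (Jk B k) ^ (i+1) = ⊥ ∨
      Module.finrank k ((Jk B k) ^ (i+1) : Submodule k B) + i ≤ Module.finrank k B := by
    intro i
    induction i with
    | zero => exact Or.inr (by simpa using Submodule.finrank_le _)
    | succ i ih =>
      rcases ih with h | h
      · left; rw [pow_succ, h, Submodule.bot_mul]
      · by_cases hb : (Jk B k) ^ (i+2) = ⊥
        · exact Or.inl hb
        · right
          have hne : (Jk B k) ^ (i+1+1) ≠ (Jk B k) ^ (i+1) := fun he => hb (he.trans (Jk_pow_stab B k i he))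
          have hlt : (Jk B k) ^ (i+1+1) < (Jk B k) ^ (i+1) := lt_of_le_of_ne (Jk_pow_le B k i) hne
          have := Submodule.finrank_lt_finrank_of_lt hlt
          omega
  rcases key (Module.finrank k B) with h | h
  · exact ⟨_, h⟩
  · refine ⟨Module.finrank k B, ?_⟩
    have h0 : Module.finrank k ((Jk B k) ^ (Module.finrank k B + 1) : Submodule k B) = 0 := by omega
    rwa [Submodule.finrank_eq_zero] at h0

end Nilpotent

section Filtration
variable (k : Type) [Field k] [Algebra k B]

/-- span of `J^i`-multiples -/
def Usm (i : ℕ) (Z : Type) [AddCommGroup Z] [Module B Z] : Submodule B Z :=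
  Submodule.span B {x | ∃ a ∈ (Jk B k) ^ i, ∃ z : Z, x = a • z}

lemma Usm_zero (Z : Type) [AddCommGroup Z] [Module B Z] : Usm B k 0 Z = ⊤ := by
  rw [eq_top_iff]
  intro z _
  refine Submodule.subset_span ⟨1, ?_, z, (one_smul B z).symm⟩
  rw [pow_zero, Submodule.one_eq_span]
  exact Submodule.mem_span_singleton_self 1

/-- smul by a radical element sends `Usm 1` into `Usm (i+2)` for `a ∈ Jk^(i+1)` -/
lemma smul_Usm_one (i : ℕ) (Z : Type) [AddCommGroup Z] [Module B Z]
    {y : Z} (hy : y ∈ Usm B k 1 Z) :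
    ∀ a ∈ (Jk B k) ^ (i+1), a • y ∈ Usm B k (i+2) Z := by
  refine Submodule.span_induction (p := fun y _ => ∀ a ∈ (Jk B k) ^ (i+1), a • y ∈ Usm B k (i+2) Z)
    ?_ ?_ ?_ ?_ hy
  · rintro x ⟨b, hb, z, rfl⟩ a ha
    rw [smul_smul]
    refine Submodule.subset_span ⟨a * b, ?_, z, rfl⟩
    rw [pow_succ (n := i+1)]
    rw [pow_one] at hb
    exact Submodule.mul_mem_mul ha hb
  · intro a _
    rw [smul_zero]; exact zero_mem _
  · intro u v _ _ hu hv a ha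
    rw [smul_add]; exact add_mem (hu a ha) (hv a ha)
  · intro b u _ hu a ha
    rw [smul_smul]
    exact hu (a * b) (Jk_pow_right_closed B k i ha b)

end Filtration

end RT


section Master
variable (k : Type) [Field k] {B : Type} [Ring B] [Algebra k B]
variable {M : ModuleCat.{0} B} (P : ProjectiveResolution M) (j : ℕ)

lemma fac_semisimple [IsArtinian B B] (Z : Type) [AddCommGroup Z] [Module B Z]
    (hkilled : ∀ a ∈ JJ B, ∀ z : Z, a • z = 0)
    (hfg : ∀ Y : ModuleCat.{0} B, Module.Finite B Y → Fac B M P j Y) :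
    Fac B M P j (ModuleCat.of B Z) := by
  haveI hss : IsSemisimpleModule B Z := semisimple_of_J_killed B Z hkilled
  have hproj : ∀ z : Z, ∃ π : Z →ₗ[B] ↥(Submodule.span B {z}),
      ∀ w : ↥(Submodule.span B {z}), π w.1 = w := by
    intro z
    obtain ⟨q, hq⟩ := exists_isCompl (Submodule.span B {z})
    exact ⟨Submodule.linearProjOfIsCompl _ q hq,
      fun w => Submodule.linearProjOfIsCompl_apply_left hq w⟩
  choose π hπ using hproj
  have hWkilled : ∀ a ∈ JJ B, ∀ w : (∀ z : Z, ↥(Submodule.span B {z})), a • w = 0 := by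
    intro a ha w
    funext z
    apply Subtype.ext
    show a • ((w z : ↥(Submodule.span B {z})) : Z) = (0 : Z)
    exact hkilled a ha _
  haveI hWss : IsSemisimpleModule B (∀ z : Z, ↥(Submodule.span B {z})) :=
    semisimple_of_J_killed B _ hWkilled
  set ι : Z →ₗ[B] (∀ z : Z, ↥(Submodule.span B {z})) := LinearMap.pi (fun z => π z) with hι
  have hinj : Function.Injective ι := by
    have h0 : ∀ u : Z, ι u = 0 → u = 0 := by
      intro u hu
      have h1 : π u u = 0 := by
        have := congrFun hu u
        exact this
      have h2 : π u u = ⟨u, Submodule.mem_span_singleton_self u⟩ :=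
        hπ u ⟨u, Submodule.mem_span_singleton_self u⟩
      have := h2.symm.trans h1
      simpa using congrArg Subtype.val this
    intro x y hxy
    have : x - y = 0 := h0 _ (by rw [map_sub, hxy, sub_self])
    exact sub_eq_zero.mp this
  obtain ⟨c, hc⟩ := exists_isCompl (LinearMap.range ι)
  set pr := Submodule.linearProjOfIsCompl _ c hc with hpr
  set e := LinearEquiv.ofInjective ι hinj with he
  set r : (∀ z : Z, ↥(Submodule.span B {z})) →ₗ[B] Z := e.symm.toLinearMap.comp pr with hr
  have hry : ∀ y : Z, r (ι y) = y := by
    intro y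
    have hmem : ι y ∈ LinearMap.range ι := ⟨y, rfl⟩
    have h1 : pr (ι y) = ⟨ι y, hmem⟩ :=
      Submodule.linearProjOfIsCompl_apply_left hc ⟨ι y, hmem⟩
    have h2 : e y = ⟨ι y, hmem⟩ := Subtype.ext (by rw [he]; rfl)
    show e.symm (pr (ι y)) = y
    rw [h1, ← h2, LinearEquiv.symm_apply_apply]
  have hW : Fac B M P j (ModuleCat.of B (∀ z : Z, ↥(Submodule.span B {z}))) :=
    fac_pi P j _ (fun z => hfg (ModuleCat.of B ↥(Submodule.span B {z}))
      (by show Module.Finite B ↥(Submodule.span B {z}); infer_instance))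
  exact fac_retract P j (ModuleCat.of B (∀ z : Z, ↥(Submodule.span B {z}))) (ModuleCat.of B Z)
    hW (ModuleCat.ofHom ι) (ModuleCat.ofHom r) hry


lemma smul_mem_Usm (i : ℕ) (Z : Type) [AddCommGroup Z] [Module B Z]
    {a : B} (ha : a ∈ (Jk B k) ^ i) {y : Z} (hy : y ∈ Usm B k 1 Z) :
    a • y ∈ Usm B k (i+1) Z := by
  cases i with
  | zero =>
    rw [pow_zero] at ha
    obtain ⟨c, rfl⟩ := ha
    exact Submodule.smul_mem _ _ hy
  | succ i => exact smul_Usm_one B k i Z hy a ha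

lemma fac_of_Usm [IsArtinian B B] (i : ℕ) :
    ∀ (Y : ModuleCat.{0} B), (∀ x : Y, x ∈ Usm B k i Y → x = 0) →
    (∀ Y' : ModuleCat.{0} B, Module.Finite B Y' → Fac B M P j Y') →
    Fac B M P j Y := by
  induction i with
  | zero =>
    intro Y hY _
    refine fac_of_subsingleton P j Y ⟨fun a b => ?_⟩
    rw [hY a (by rw [Usm_zero]; trivial), hY b (by rw [Usm_zero]; trivial)]
  | succ i ih =>
    intro Y hY hfg
    set Y' : Submodule B Y := Usm B k 1 Y with hY'
    refine fac_ext P j Y Y' ?_ ?_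
    · -- submodule side, via ih
      refine ih (ModuleCat.of B Y') ?_ hfg
      intro x hx
      apply Subtype.ext
      refine hY x.1 ?_
      have hmap : Submodule.map Y'.subtype (Usm B k i ↥Y') ≤ Usm B k (i+1) Y := by
        rw [Usm, Submodule.map_span, Submodule.span_le]
        rintro w ⟨v, ⟨a, ha, z, rfl⟩, rfl⟩
        have : Y'.subtype (a • z) = a • (z : Y) := rfl
        rw [this]
        exact smul_mem_Usm k i Y ha z.2
      exact hmap ⟨x, hx, rfl⟩
    · -- quotient side, semisimple
      refine fac_semisimple P j (Y ⧸ Y') ?_ hfg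
      intro a ha q
      obtain ⟨y, rfl⟩ := Submodule.Quotient.mk_surjective Y' q
      rw [← Submodule.Quotient.mk_smul, Submodule.Quotient.mk_eq_zero]
      refine Submodule.subset_span ⟨a, ?_, y, rfl⟩
      rwa [pow_one]

lemma fac_all [FiniteDimensional k B] [IsArtinian B B] [IsNoetherian B B]
    (hfg : ∀ Y' : ModuleCat.{0} B, Module.Finite B Y' → Fac B M P j Y')
    (Y : ModuleCat.{0} B) : Fac B M P j Y := by
  obtain ⟨r, hr⟩ := Jk_nilpotent B k
  refine fac_of_Usm k P j (r+1) Y ?_ hfg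
  intro x hx
  have : Usm B k (r+1) Y ≤ ⊥ := by
    rw [Usm, Submodule.span_le]
    rintro w ⟨a, ha, z, rfl⟩
    rw [hr] at ha
    obtain rfl : a = 0 := ha
    simp
  simpa using this hx

end Master

/-- If `F : mod A → mod B` is a `t`-eventually homological isomorphism
which is essentially surjective, then `pd_B F(X) ≤ max t (pd_A X)` for every finitely
generated `A`-module `X`. -/
theorem pd_le_of_ehi (k : Type) [Field k] (A B : Type) [Ring A] [Algebra k A] [FiniteDimensional k A]
    [Ring B] [Algebra k B] [FiniteDimensional k B]
    (F : ModuleCat.{0} A ⥤ ModuleCat.{0} B) (t : ℕ)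
    (hEHI : IsEHI k A B F t) (hSurj : EssSurjFG A B F)
    (X : ModuleCat.{0} A) (hX : Module.Finite A X) (n : ℕ) (hn : pdLE k A X n) :
    pdLE k B (F.obj X) (max t n) := by
  haveI hArt : IsArtinian B B := isArtinian_of_tower k inferInstance
  haveI hNoe : IsNoetherian B B := isNoetherian_of_tower k inferInstance
  set P : ProjectiveResolution (F.obj X) := (HasProjectiveResolution.out (Z := F.obj X)).some
    with hP
  intro Y j hj
  obtain ⟨jj, rfl⟩ : ∃ jj, j = jj + 1 := ⟨j - 1, by omega⟩
  have hfg : ∀ Y' : ModuleCat.{0} B, Module.Finite B Y' → Fac B (F.obj X) P jj Y' := by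
    intro Y' hY'
    rw [← subsingleton_ext_iff k B (F.obj X) P jj Y']
    obtain ⟨X', hX'fin, ⟨eiso⟩⟩ := hSurj Y' hY'
    obtain ⟨eExt⟩ := hEHI X X' hX hX'fin (jj+1) (by omega)
    have hsub : Subsingleton (extM k A (jj+1) X X') := hn X' (jj+1) (by omega)
    have hsub2 : Subsingleton (extM k B (jj+1) (F.obj X) (F.obj X')) :=
      (subsingleton_congr eExt).1 hsub
    exact (subsingleton_congr
      (((Ext k (ModuleCat.{0} B) (jj+1)).obj (op (F.obj X))).mapIso eiso)).1 hsub2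
  rw [subsingleton_ext_iff k B (F.obj X) P jj Y]
  exact fac_all k P jj hfg Y
end FacLemmas
end
end

section
/- A finitely generated module X over a finite dimensional algebra A is Gorenstein projective if and only if there exists a family of short exact sequences 0 → X^i → P^{i+1} → X^{i+1} → 0 in mod A indexed by i ∈ ℤ, with each P^i finitely generated projective, each X^i in ⊥A, and X^0 = X. -/
open CategoryTheory Opposite Limits

noncomputable section

/-- `X` is Gorenstein projective: it is a cycle of an acyclic complex of finitely
generated projectives which stays acyclic under `Hom(-, Q)` for every finitely
generated projective `Q`. -/
def IsGP (Λ : Type) [Ring Λ] (X : ModuleCat.{0} Λ) : Prop :=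
  ∃ (P : ℤ → ModuleCat.{0} Λ) (d : ∀ i, P i ⟶ P (i + 1)),
    (∀ i, Module.Finite Λ (P i) ∧ Projective (P i)) ∧
    (∀ i, Function.Exact (d i) (d (i + 1))) ∧
    (∀ (Q : ModuleCat.{0} Λ), Module.Finite Λ Q → Projective Q → ∀ i,
      Function.Exact (fun g : P (i + 1 + 1) ⟶ Q => d (i + 1) ≫ g)
        (fun g : P (i + 1) ⟶ Q => d i ≫ g)) ∧
    ∃ ι : X ⟶ P 0, Function.Injective ι ∧ Function.Exact ι (d 0)

section Prelim
variable {R : Type} [Ring R]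
lemma subsingleton_iff_of_iso {M N : ModuleCat.{0} R} (e : M ≅ N) :
    Subsingleton M ↔ Subsingleton N :=
  Equiv.subsingleton_congr e.toLinearEquiv.toEquiv

lemma isZero_iff_subsingleton (M : ModuleCat.{0} R) : IsZero M ↔ Subsingleton M := by
  constructor
  · intro h
    constructor
    intro a b
    have h0 : (𝟙 M : M ⟶ M) = 0 := h.eq_of_src _ _
    have ha : (𝟙 M : M ⟶ M) a = (0 : M ⟶ M) a := by rw [h0]
    have hb : (𝟙 M : M ⟶ M) b = (0 : M ⟶ M) b := by rw [h0]
    simpa using ha.trans hb.symm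
  · intro h
    exact ModuleCat.isZero_of_subsingleton M
end Prelim

section MkRes

variable {A : Type} [Ring A]

variable (Pn : ℕ → ModuleCat.{0} A) (dn : ∀ n, Pn (n + 1) ⟶ Pn n)
  (X : ModuleCat.{0} A) (p0 : Pn 0 ⟶ X)

/-- the chain complex built from the data -/
def resCx (hex : ∀ n, Function.Exact (dn (n + 1)) (dn n)) : ChainComplex (ModuleCat.{0} A) ℕ :=
  ChainComplex.of Pn dn (fun n => by
    ext x
    simpa using (hex n).apply_apply_eq_zero x)

/-- build a projective resolution from an exact complex of projectives -/
def mkRes (hproj : ∀ n, Projective (Pn n))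
    (hsurj : Function.Surjective p0)
    (hex0 : Function.Exact (dn 0) p0)
    (hex : ∀ n, Function.Exact (dn (n + 1)) (dn n)) :
    ProjectiveResolution X where
  complex := resCx Pn dn hex
  projective n := hproj n
  π := (ChainComplex.toSingle₀Equiv _ _).symm ⟨p0, by
    have h : (resCx Pn dn hex).d 1 0 = dn 0 := ChainComplex.of_d Pn dn 0
    rw [h]
    ext x
    exact hex0.apply_apply_eq_zero x⟩
  quasiIso := ⟨fun n => by
    cases n with
    | zero =>
      rw [ChainComplex.quasiIsoAt₀_iff, ShortComplex.quasiIso_iff_of_zeros']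
      · constructor
        · rw [ShortComplex.moduleCat_exact_iff]
          intro x hx
          dsimp at hx ⊢
          change p0 x = 0 at hx
          obtain ⟨y, hy⟩ := (hex0 x).1 hx
          refine ⟨y, ?_⟩
          change (dn 0) y = x
          exact hy
        · exact (ModuleCat.epi_iff_surjective _).2 hsurj
      · exact (resCx Pn dn hex).shape 0 0 (by simp)
      · exact (HomologicalComplex.isZero_single_obj_X (ComplexShape.down ℕ) 0 X 1
          (by simp)).eq_of_src _ _
      · exact ((ChainComplex.single₀ (ModuleCat.{0} A)).obj X).shape 0 0 (by simp)
    | succ n =>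
      rw [quasiIsoAt_iff_exactAt']
      · rw [HomologicalComplex.exactAt_iff' _ (n + 1 + 1) (n + 1) n (by simp) (by simp)]
        rw [ShortComplex.moduleCat_exact_iff]
        intro x hx
        have hg : (resCx Pn dn hex).d (n + 1) n = dn n := ChainComplex.of_d _ _ n
        have hf : (resCx Pn dn hex).d (n + 1 + 1) (n + 1) = dn (n + 1) :=
          ChainComplex.of_d _ _ (n + 1)
        have hx' : dn n x = 0 := by rw [← hg]; exact hx
        obtain ⟨y, hy⟩ := (hex n x).1 hx'
        refine ⟨y, ?_⟩
        show ((resCx Pn dn hex).d (n + 1 + 1) (n + 1)) y = x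
        rw [hf]
        exact hy
      · apply ChainComplex.exactAt_succ_single_obj⟩

end MkRes


section Bridge

variable {A : Type} [Ring A]
variable (Pn : ℕ → ModuleCat.{0} A) (dn : ∀ n, Pn (n + 1) ⟶ Pn n)
  (X : ModuleCat.{0} A) (p0 : Pn 0 ⟶ X)
variable (k : Type) [Field k] [Algebra k A]

lemma subsingleton_ext_iff_s7 (hproj : ∀ n, Projective (Pn n))
    (hsurj : Function.Surjective p0)
    (hex0 : Function.Exact (dn 0) p0)
    (hex : ∀ n, Function.Exact (dn (n + 1)) (dn n)) (n : ℕ) (Y : ModuleCat.{0} A) :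
    Subsingleton (extM k A (n + 1) X Y) ↔
      Function.Exact (fun g : Pn n ⟶ Y => (dn n ≫ g : Pn (n + 1) ⟶ Y))
        (fun g : Pn (n + 1) ⟶ Y => (dn (n + 1) ≫ g : Pn (n + 1 + 1) ⟶ Y)) := by
  have e := (mkRes Pn dn X p0 hproj hsurj hex0 hex).isoExt (R := k) (n + 1) Y
  set K := (mkRes Pn dn X p0 hproj hsurj hex0 hex).complex.linearYonedaObj k Y with hK
  rw [subsingleton_iff_of_iso e]
  rw [← isZero_iff_subsingleton]
  rw [← HomologicalComplex.exactAt_iff_isZero_homology]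
  rw [HomologicalComplex.exactAt_iff' _ n (n+1) (n+1+1) (by simp) (by simp)]
  rw [ShortComplex.ShortExact.moduleCat_exact_iff_function_exact]
  have hf : ⇑((HomologicalComplex.sc' K n (n+1) (n+1+1)).f)
      = fun g : Pn n ⟶ Y => (dn n ≫ g : Pn (n+1) ⟶ Y) := by
    funext g
    show (((mkRes Pn dn X p0 hproj hsurj hex0 hex).complex.linearYonedaObj k Y).d n (n+1)) g
      = dn n ≫ g
    rw [ChainComplex.linearYonedaObj_d,
      show (mkRes Pn dn X p0 hproj hsurj hex0 hex).complex.d (n+1) n = dn n from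
        ChainComplex.of_d Pn dn n]
    rfl
  have hg : ⇑((HomologicalComplex.sc' K n (n+1) (n+1+1)).g)
      = fun g : Pn (n+1) ⟶ Y => (dn (n+1) ≫ g : Pn (n+1+1) ⟶ Y) := by
    funext g
    show (((mkRes Pn dn X p0 hproj hsurj hex0 hex).complex.linearYonedaObj k Y).d (n+1) (n+1+1)) g
      = dn (n+1) ≫ g
    rw [ChainComplex.linearYonedaObj_d,
      show (mkRes Pn dn X p0 hproj hsurj hex0 hex).complex.d (n+1+1) (n+1) = dn (n+1) from
        ChainComplex.of_d Pn dn (n+1)]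
    rfl
  rw [hf, hg]
  exact Iff.rfl

end Bridge

section Splice

variable {A : Type} [Ring A]
variable (P Z : ℤ → ModuleCat.{0} A)
variable (d : ∀ i, P i ⟶ P (i + 1))
variable (inc : ∀ i, Z i ⟶ P i) (pr : ∀ i, P i ⟶ Z (i + 1))

/-- differential with target index cast -/
def DD {a b : ℤ} (h : a + 1 = b) : P a ⟶ P b := d a ≫ eqToHom (congrArg P h)

/-- projection with target index cast -/
def prC {a b : ℤ} (h : a + 1 = b) : P a ⟶ Z b := pr a ≫ eqToHom (congrArg Z h)

section Facts

variable (hfact : ∀ i, d i = pr i ≫ inc (i + 1))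
  (hinj : ∀ i, Function.Injective (inc i))
  (hsurj : ∀ i, Function.Surjective (pr i))
  (hexZ : ∀ i, Function.Exact (inc i) (pr i))

include hfact in
lemma d_apply (i : ℤ) (x : P i) : d i x = inc (i + 1) (pr i x) := by rw [hfact i]; simp

include hfact hexZ in
lemma pr_d_zero (i : ℤ) (x : P i) : pr (i + 1) (d i x) = 0 := by
  rw [d_apply P Z d inc pr hfact i x]
  exact (hexZ (i + 1) _).2 ⟨pr i x, rfl⟩

include hfact hinj hsurj hexZ in
lemma d_exact (i : ℤ) : Function.Exact (d i) (d (i + 1)) := by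
  intro y
  constructor
  · intro h0
    have h1 : inc (i + 1 + 1) (pr (i + 1) y) = 0 := by
      rw [← d_apply P Z d inc pr hfact]; exact h0
    have h2 : pr (i + 1) y = 0 := hinj _ (h1.trans (map_zero _).symm)
    obtain ⟨z, hz⟩ := (hexZ (i + 1) y).1 h2
    obtain ⟨x, hx⟩ := hsurj i z
    exact ⟨x, by rw [d_apply P Z d inc pr hfact, hx, hz]⟩
  · rintro ⟨x, rfl⟩
    rw [d_apply P Z d inc pr hfact (i + 1)]
    rw [pr_d_zero P Z d inc pr hfact hexZ i x]
    simp

include hfact hinj hsurj hexZ in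
lemma exact_DD {a b c : ℤ} (h1 : a + 1 = b) (h2 : b + 1 = c) :
    Function.Exact (DD P d h1) (DD P d h2) := by
  subst h1; subst h2
  simpa [DD] using d_exact P Z d inc pr hfact hinj hsurj hexZ a

include hfact hsurj hexZ in
lemma exact_DD_prC {a b c : ℤ} (h1 : a + 1 = b) (h2 : b + 1 = c) :
    Function.Exact (DD P d h1) (prC P Z pr h2) := by
  subst h1; subst h2
  simp only [DD, prC, eqToHom_refl, Category.comp_id]
  intro y
  constructor
  · intro h0
    obtain ⟨z, hz⟩ := (hexZ (a + 1) y).1 h0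
    obtain ⟨x, hx⟩ := hsurj a z
    exact ⟨x, by rw [d_apply P Z d inc pr hfact, hx, hz]⟩
  · rintro ⟨x, rfl⟩
    exact pr_d_zero P Z d inc pr hfact hexZ a x

include hsurj in
lemma surj_prC {a b : ℤ} (h : a + 1 = b) : Function.Surjective (prC P Z pr h) := by
  subst h
  simpa [prC] using hsurj a

end Facts

lemma exact_hom_DD_iff {a b c : ℤ} (h1 : a + 1 = b) (h2 : b + 1 = c) (Y : ModuleCat.{0} A) :
    (Function.Exact (fun g : P c ⟶ Y => (DD P d h2 ≫ g : P b ⟶ Y))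
      (fun g : P b ⟶ Y => (DD P d h1 ≫ g : P a ⟶ Y)) ↔
    Function.Exact (fun g : P (a + 1 + 1) ⟶ Y => (d (a + 1) ≫ g : P (a + 1) ⟶ Y))
      (fun g : P (a + 1) ⟶ Y => (d a ≫ g : P a ⟶ Y))) := by
  subst h1; subst h2
  simp only [DD, eqToHom_refl, Category.comp_id]

lemma exact_hom_d_congr {a a' : ℤ} (h : a = a') (Y : ModuleCat.{0} A) :
    (Function.Exact (fun g : P (a + 1 + 1) ⟶ Y => (d (a + 1) ≫ g : P (a + 1) ⟶ Y))
      (fun g : P (a + 1) ⟶ Y => (d a ≫ g : P a ⟶ Y)) ↔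
    Function.Exact (fun g : P (a' + 1 + 1) ⟶ Y => (d (a' + 1) ≫ g : P (a' + 1) ⟶ Y))
      (fun g : P (a' + 1) ⟶ Y => (d a' ≫ g : P a' ⟶ Y))) := by
  subst h; rfl

end Splice

section M

variable {A : Type} [Ring A] (k : Type) [Field k] [Algebra k A]
variable (P Z : ℤ → ModuleCat.{0} A)
variable (d : ∀ i, P i ⟶ P (i + 1))
variable (inc : ∀ i, Z i ⟶ P i) (pr : ∀ i, P i ⟶ Z (i + 1))
variable (hproj : ∀ i, Projective (P i))
  (hfact : ∀ i, d i = pr i ≫ inc (i + 1))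
  (hinj : ∀ i, Function.Injective (inc i))
  (hsurj : ∀ i, Function.Surjective (pr i))
  (hexZ : ∀ i, Function.Exact (inc i) (pr i))

include hproj hfact hinj hsurj hexZ in
lemma subsingleton_ext_iff_Z (a : ℤ) (n : ℕ) (j : ℤ) (hj : j = a + 3 + n) (Y : ModuleCat.{0} A) :
    Subsingleton (extM k A (n + 1) (Z j) Y) ↔
      Function.Exact (fun g : P (a + 1 + 1) ⟶ Y => (d (a + 1) ≫ g : P (a + 1) ⟶ Y))
        (fun g : P (a + 1) ⟶ Y => (d a ≫ g : P a ⟶ Y)) := by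
  have base := subsingleton_ext_iff_s7 (fun m : ℕ => P (j - 1 - m))
    (fun m : ℕ => DD P d (by push_cast; omega : (j - 1 - ((m : ℤ) + 1)) + 1 = j - 1 - m))
    (Z j) (prC P Z pr (by push_cast; omega : (j - 1 - (((0 : ℕ) : ℤ))) + 1 = j)) k
    (fun m => hproj _)
    (surj_prC P Z pr hsurj _)
    (exact_DD_prC P Z d inc pr hfact hsurj hexZ _ _)
    (fun m => exact_DD P Z d inc pr hfact hinj hsurj hexZ _ _) n Y
  refine base.trans ?_
  rw [exact_hom_DD_iff P d]
  exact exact_hom_d_congr P d (by omega : j - 1 - ((n : ℤ) + 1 + 1) = a) Y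

end M

section QTransfer

variable {A : Type} [Ring A]

lemma exact_hom_retract {D0 D1 D2 M Q : ModuleCat.{0} A} (u : D0 ⟶ D1) (v : D1 ⟶ D2)
    (huv : u ≫ v = 0) (s : Q ⟶ M) (r : M ⟶ Q) (hsr : s ≫ r = 𝟙 Q)
    (hM : Function.Exact (fun g : D2 ⟶ M => (v ≫ g : D1 ⟶ M))
      (fun g : D1 ⟶ M => (u ≫ g : D0 ⟶ M))) :
    Function.Exact (fun g : D2 ⟶ Q => (v ≫ g : D1 ⟶ Q))
      (fun g : D1 ⟶ Q => (u ≫ g : D0 ⟶ Q)) := by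
  intro y
  constructor
  · intro h0
    have h0' : u ≫ y = 0 := h0
    obtain ⟨g, hg⟩ := (hM (y ≫ s)).1 (by show u ≫ y ≫ s = 0; rw [← Category.assoc, h0', zero_comp])
    have hg' : v ≫ g = y ≫ s := hg
    refine ⟨g ≫ r, ?_⟩
    show v ≫ g ≫ r = y
    rw [← Category.assoc, hg', Category.assoc, hsr, Category.comp_id]
  · rintro ⟨g, rfl⟩
    show u ≫ v ≫ g = 0
    rw [← Category.assoc, huv, zero_comp]

lemma exact_hom_pi (m : ℕ) {D0 D1 D2 : ModuleCat.{0} A} (u : D0 ⟶ D1) (v : D1 ⟶ D2)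
    (huv : u ≫ v = 0)
    (hA : Function.Exact (fun g : D2 ⟶ ModuleCat.of A A => (v ≫ g : D1 ⟶ ModuleCat.of A A))
      (fun g : D1 ⟶ ModuleCat.of A A => (u ≫ g : D0 ⟶ ModuleCat.of A A))) :
    Function.Exact
      (fun g : D2 ⟶ ModuleCat.of A (Fin m → A) => (v ≫ g : D1 ⟶ ModuleCat.of A (Fin m → A)))
      (fun g : D1 ⟶ ModuleCat.of A (Fin m → A) => (u ≫ g : D0 ⟶ ModuleCat.of A (Fin m → A))) := by
  intro y
  constructor
  · intro h0
    have h0' : u ≫ y = 0 := h0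
    have hcomp : ∀ l : Fin m, ∃ gl : D2 ⟶ ModuleCat.of A A,
        v ≫ gl = y ≫ ModuleCat.ofHom (LinearMap.proj l) := by
      intro l
      exact (hA _).1 (by show u ≫ y ≫ _ = 0; rw [← Category.assoc, h0', zero_comp])
    choose gl hgl using hcomp
    refine ⟨ModuleCat.ofHom (LinearMap.pi fun l => (gl l).hom), ?_⟩
    show v ≫ ModuleCat.ofHom (LinearMap.pi fun l => (gl l).hom) = y
    ext x
    rename_i l
    have h1 := ConcreteCategory.congr_hom (hgl l) x
    simpa using h1
  · rintro ⟨g, rfl⟩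
    show u ≫ v ≫ g = 0
    rw [← Category.assoc, huv, zero_comp]

lemma exact_hom_fg_proj {D0 D1 D2 : ModuleCat.{0} A} (u : D0 ⟶ D1) (v : D1 ⟶ D2)
    (huv : u ≫ v = 0) (Q : ModuleCat.{0} A) (hQfin : Module.Finite A Q)
    (hQproj : Projective Q)
    (hA : Function.Exact (fun g : D2 ⟶ ModuleCat.of A A => (v ≫ g : D1 ⟶ ModuleCat.of A A))
      (fun g : D1 ⟶ ModuleCat.of A A => (u ≫ g : D0 ⟶ ModuleCat.of A A))) :
    Function.Exact (fun g : D2 ⟶ Q => (v ≫ g : D1 ⟶ Q))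
      (fun g : D1 ⟶ Q => (u ≫ g : D0 ⟶ Q)) := by
  have hQp : Module.Projective A Q :=
    (IsProjective.iff_projective Q).mpr hQproj
  haveI := hQfin
  obtain ⟨m, f, hf⟩ := Module.Finite.exists_fin' A Q
  obtain ⟨s, hs⟩ := Module.projective_lifting_property f LinearMap.id hf
  refine exact_hom_retract u v huv
    (s := (ModuleCat.ofHom s : Q ⟶ ModuleCat.of A (Fin m → A))) (r := (ModuleCat.ofHom f : ModuleCat.of A (Fin m → A) ⟶ Q))
    ?_ (exact_hom_pi m u v huv hA)
  ext x
  exact LinearMap.congr_fun hs x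

end QTransfer

/-- `X` is Gorenstein projective iff there are short exact sequences
`0 → X^i → P^{i+1} → X^{i+1} → 0` (`i ∈ ℤ`) with `P^i` finitely generated projective,
`X^i ∈ ⊥A` and `X^0 = X`. -/
theorem isGP_iff_exists_perp_resolution (k : Type) [Field k] (A : Type) [Ring A]
    [Algebra k A] [FiniteDimensional k A]
    (X : ModuleCat.{0} A) (hX : Module.Finite A X) :
    IsGP A X ↔
      ∃ (Xs P : ℤ → ModuleCat.{0} A),
        (∀ i, Module.Finite A (P i) ∧ Projective (P i)) ∧
        (∀ i, Module.Finite A (Xs i) ∧ MemPerp k A (Xs i)) ∧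
        Nonempty (Xs 0 ≅ X) ∧
        (∀ i : ℤ, ∃ (ι : Xs i ⟶ P (i + 1)) (π : P (i + 1) ⟶ Xs (i + 1)),
          Function.Injective ι ∧ Function.Surjective π ∧ Function.Exact ι π) := by
  constructor
  · rintro ⟨P, d, hfp, hex, hhom, ι, hιinj, hιex⟩
    have hker : ∀ j (x : P j), d (j + 1) (d j x) = 0 := fun j x => (hex j).apply_apply_eq_zero x
    set Z : ℤ → ModuleCat.{0} A := fun j => ModuleCat.of A (LinearMap.ker (d j).hom) with hZdef
    set inc : ∀ j, Z j ⟶ P j := fun j => (ModuleCat.ofHom (LinearMap.ker (d j).hom).subtype : Z j ⟶ P j) with hincdef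
    set pr : ∀ j, P j ⟶ Z (j + 1) := fun j =>
      (ModuleCat.ofHom (LinearMap.codRestrict (LinearMap.ker (d (j + 1)).hom) (d j).hom
        (fun x => LinearMap.mem_ker.2 (hker j x))) : P j ⟶ Z (j + 1)) with hprdef
    have hfact : ∀ i, d i = pr i ≫ inc (i + 1) := fun i => by ext x; rfl
    have hinj : ∀ i, Function.Injective (inc i) := fun i a b hab => Subtype.ext hab
    have hsurj : ∀ i, Function.Surjective (pr i) := by
      intro i y
      obtain ⟨x, hx⟩ := (hex i y.1).1 (LinearMap.mem_ker.mp y.2)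
      exact ⟨x, Subtype.ext hx⟩
    have hexZ : ∀ i, Function.Exact (inc i) (pr i) := by
      intro i y
      constructor
      · intro h0
        have h1 : d i y = 0 := congrArg Subtype.val h0
        exact ⟨⟨y, LinearMap.mem_ker.2 h1⟩, rfl⟩
      · rintro ⟨z, rfl⟩
        exact Subtype.ext (LinearMap.mem_ker.mp z.2)
    have finA : Module.Finite A (ModuleCat.of A A) := (inferInstance : Module.Finite A A)
    have projA : Projective (ModuleCat.of A A) := (IsProjective.iff_projective A).mp inferInstance
    refine ⟨Z, fun t => P (t - 1), fun i => hfp (i - 1), fun i => ⟨?_, ?_⟩, ⟨?_⟩, ?_⟩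
    · -- finiteness of Z i
      haveI : IsNoetherianRing A := isNoetherian_of_tower k inferInstance
      haveI : Module.Finite A (P i) := (hfp i).1
      haveI : IsNoetherian A (P i) := isNoetherian_of_isNoetherianRing_of_finite A (P i)
      exact Module.Finite.iff_fg.mpr (IsNoetherian.noetherian _)
    · -- MemPerp
      intro j' hj'
      match j', hj' with
      | (n + 1), _ =>
        refine (subsingleton_ext_iff_Z k P Z d inc pr (fun t => (hfp t).2) hfact hinj hsurj hexZ
          (i - 3 - n) n i (by push_cast; omega) (ModuleCat.of A A)).2 ?_
        exact hhom (ModuleCat.of A A) finA projA (i - 3 - n)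
    · -- iso Z 0 ≅ X
      have e1 := LinearEquiv.ofInjective ι.hom hιinj
      have hr : LinearMap.ker (d 0).hom = LinearMap.range ι.hom :=
        (LinearMap.exact_iff (f := ι.hom) (g := (d 0).hom)).mp hιex
      exact ((LinearEquiv.ofEq _ _ hr).trans e1.symm).toModuleIso
    · -- SESs
      intro i
      have key : ∀ b : ℤ, b = i →
          ∃ (ι' : Z i ⟶ P b) (π' : P b ⟶ Z (i + 1)),
            Function.Injective ι' ∧ Function.Surjective π' ∧ Function.Exact ι' π' := by
        rintro b rfl
        exact ⟨inc b, pr b, hinj b, hsurj b, hexZ b⟩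
      exact key _ (by omega)
  · rintro ⟨Zs, P', hP, hZs, ⟨e⟩, hses⟩
    choose ι π hι hπ hexZ using hses
    set P : ℤ → ModuleCat.{0} A := fun i => P' (i + 1) with hPdef
    set d : ∀ i, P i ⟶ P (i + 1) := fun i => π i ≫ ι (i + 1) with hddef
    have hfact : ∀ i, d i = π i ≫ ι (i + 1) := fun i => rfl
    have hdexact := d_exact P Zs d ι π hfact hι hπ hexZ
    refine ⟨P, d, fun i => hP (i + 1), hdexact, ?_, e.inv ≫ ι 0, ?_, ?_⟩
    · -- hom exactness
      intro Q hQfin hQproj i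
      have huv : d i ≫ d (i + 1) = 0 := by
        ext x
        simpa using (hdexact i).apply_apply_eq_zero x
      have hA := (subsingleton_ext_iff_Z k P Zs d ι π (fun t => (hP (t + 1)).2) hfact hι hπ hexZ
        i 0 (i + 3) (by push_cast; omega) (ModuleCat.of A A)).1 ((hZs (i + 3)).2 1 one_pos)
      exact exact_hom_fg_proj (d i) (d (i + 1)) huv Q hQfin hQproj hA
    · -- injectivity of e.inv ≫ ι 0
      intro a b hab
      have h1 : ι 0 (e.inv a) = ι 0 (e.inv b) := hab
      have h2 : e.inv a = e.inv b := hι 0 h1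
      calc a = e.hom (e.inv a) := (e.toLinearEquiv.apply_symm_apply a).symm
      _ = e.hom (e.inv b) := by rw [h2]
      _ = b := e.toLinearEquiv.apply_symm_apply b
    · -- exactness at X
      intro y
      constructor
      · intro h0
        have h1 : ι 1 (π 0 y) = 0 := h0
        have h2 : π 0 y = 0 := hι 1 (h1.trans (map_zero _).symm)
        obtain ⟨z, hz⟩ := (hexZ 0 y).1 h2
        refine ⟨e.hom z, ?_⟩
        show ι 0 (e.inv (e.hom z)) = y
        rw [show e.inv (e.hom z) = z from e.toLinearEquiv.symm_apply_apply z, hz]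
      · rintro ⟨x, rfl⟩
        have h1 : π 0 (ι 0 (e.inv x)) = 0 := (hexZ 0 _).2 ⟨e.inv x, rfl⟩
        show (d 0) ((e.inv ≫ ι 0) x) = 0
        show ι 1 (π 0 (ι 0 (e.inv x))) = 0
        rw [h1, map_zero]
end
end
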